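/- Let k_1, k_2 ≥ 2 and define F implicitly by the constraint ψ_{k_1}(z_i) = ψ_{k_2}(z_o), i.e., z_o = F(z_i). Then F is continuously differentiable with F'(z_i) = (z_o/z_i)·(1 + φ_{k_1−1}(z_i) − φ_{k_1}(z_i))/(1 + φ_{k_2−1}(z_o) − φ_{k_2}(z_o)) > 0. -/

import Mathlib

open Real Filter Set

/-- `truncExpSum k z = Σ_{j≥k} z^j/j!`. -/
noncomputable def truncExpSum (k : ℕ) (z : ℝ) : ℝ :=
  ∑' j : ℕ, if k ≤ j then z ^ j / (Nat.factorial j : ℝ) else 0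

/-- `poisTail k z = P(Poi(z) ≥ k) = e^{-z} Σ_{j≥k} z^j/j!`. -/
noncomputable def poisTail (k : ℕ) (z : ℝ) : ℝ := Real.exp (-z) * truncExpSum k z

/-- Mean of Poisson(z) conditioned on being ≥ k: `ψ_k(z) = z f_{k-1}(z)/f_k(z)`. -/
noncomputable def truncMean (k : ℕ) (z : ℝ) : ℝ :=
  z * truncExpSum (k - 1) z / truncExpSum k z

/-- Second moment of the truncated Poisson. -/
noncomputable def truncSecondMoment (k : ℕ) (z : ℝ) : ℝ :=
  (∑' j : ℕ, if k ≤ j then (j : ℝ) ^ 2 * z ^ j / (Nat.factorial j : ℝ) else 0)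
    / truncExpSum k z

/-- Variance of the truncated Poisson. -/
noncomputable def truncVar (k : ℕ) (z : ℝ) : ℝ :=
  truncSecondMoment k z - (truncMean k z) ^ 2

/-- `φ_r(z) = z·P(Poi(z)=r−1)/P(Poi(z)≥r)` for `r ≥ 1`, with `φ_0 := 0`. -/
noncomputable def phiP (r : ℕ) (z : ℝ) : ℝ :=
  if r = 0 then 0
  else z * (Real.exp (-z) * z ^ (r - 1) / (Nat.factorial (r - 1) : ℝ)) / poisTail r z

/-- `H(z_i,z_o) = (1 − φ_{k_1}(z_i))(1 − φ_{k_2}(z_o)) − φ_{k_1−1}(z_i)φ_{k_2−1}(z_o)`. -/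
noncomputable def Hfun (k1 k2 : ℕ) (zi zo : ℝ) : ℝ :=
  (1 - phiP k1 zi) * (1 - phiP k2 zo) - phiP (k1 - 1) zi * phiP (k2 - 1) zo

/-- `Ψ(z_i,z_o) = max{ z_i/(p_{k_1}(z_i)p_{k_2−1}(z_o)), z_o/(p_{k_2}(z_o)p_{k_1−1}(z_i)) }`. -/
noncomputable def Psi (k1 k2 : ℕ) (zi zo : ℝ) : ℝ :=
  max (zi / (poisTail k1 zi * poisTail (k2 - 1) zo))
      (zo / (poisTail k2 zo * poisTail (k1 - 1) zi))

open Topology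

lemma summable_trunc (k : ℕ) (z : ℝ) (hz : 0 ≤ z) :
    Summable (fun j : ℕ => if k ≤ j then z ^ j / (Nat.factorial j : ℝ) else 0) := by
  refine Summable.of_nonneg_of_le (fun j => ?_) (fun j => ?_) (Real.summable_pow_div_factorial z)
  · split <;> positivity
  · split
    · exact le_refl _
    · positivity

lemma truncExpSum_eq (k : ℕ) (z : ℝ) :
    truncExpSum k z = Real.exp z - ∑ j ∈ Finset.range k, z ^ j / (Nat.factorial j : ℝ) := by
  have h := Real.summable_pow_div_factorial z
  have hexp : Real.exp z = ∑' j : ℕ, z ^ j / (Nat.factorial j : ℝ) := by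
    rw [Real.exp_eq_exp_ℝ, NormedSpace.exp_eq_tsum_div]
  have hsplit := Summable.sum_add_tsum_compl (s := Finset.range k) h
  have hsub : (∑' (i : ↑((Finset.range k : Finset ℕ) : Set ℕ)ᶜ), z ^ (i:ℕ) / (Nat.factorial (i:ℕ) : ℝ))
      = truncExpSum k z := by
    rw [tsum_subtype (((Finset.range k : Finset ℕ) : Set ℕ)ᶜ) (fun j => z ^ j / (Nat.factorial j : ℝ))]
    unfold truncExpSum
    congr 1
    funext j
    by_cases hj : k ≤ j
    · simp [Set.indicator, hj, Finset.mem_range, not_lt.mpr hj]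
    · simp [Set.indicator, hj, Finset.mem_range, not_le.mp hj]
  rw [hexp, ← hsplit, hsub]; ring

lemma truncExpSum_pos (k : ℕ) {z : ℝ} (hz : 0 < z) : 0 < truncExpSum k z := by
  have hs := summable_trunc k z hz.le
  refine Summable.tsum_pos hs (fun j => ?_) k ?_
  · split <;> positivity
  · simp only [le_refl, if_true]
    positivity

lemma truncExpSum_succ (k : ℕ) (z : ℝ) :
    truncExpSum k z = truncExpSum (k + 1) z + z ^ k / (Nat.factorial k : ℝ) := by
  rw [truncExpSum_eq, truncExpSum_eq, Finset.sum_range_succ]; ring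

lemma contDiff_truncExpSum (k : ℕ) : ContDiff ℝ ⊤ (truncExpSum k) := by
  have : truncExpSum k = fun z => Real.exp z - ∑ j ∈ Finset.range k, z ^ j / (Nat.factorial j : ℝ) := by
    funext z; exact truncExpSum_eq k z
  rw [this]
  apply Real.contDiff_exp.sub
  apply ContDiff.sum
  intro j _
  exact (contDiff_id.pow j).div_const _

lemma hasDerivAt_truncExpSum (k : ℕ) (z : ℝ) :
    HasDerivAt (truncExpSum k) (truncExpSum (k - 1) z) z := by
  have hfun : truncExpSum k = fun z => Real.exp z - ∑ j ∈ Finset.range k, z ^ j / (Nat.factorial j : ℝ) := by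
    funext z; exact truncExpSum_eq k z
  rw [hfun]
  have hP : HasDerivAt (fun z : ℝ => ∑ j ∈ Finset.range k, z ^ j / (Nat.factorial j : ℝ))
      (∑ j ∈ Finset.range (k - 1), z ^ j / (Nat.factorial j : ℝ)) z := by
    have : HasDerivAt (fun z : ℝ => ∑ j ∈ Finset.range k, z ^ j / (Nat.factorial j : ℝ))
        (∑ j ∈ Finset.range k, (j : ℝ) * z ^ (j - 1) / (Nat.factorial j : ℝ)) z := by
      apply HasDerivAt.fun_sum
      intro j _
      simpa [div_eq_mul_inv] using (hasDerivAt_pow j z).div_const (Nat.factorial j : ℝ)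
    convert this using 1
    rcases Nat.eq_zero_or_pos k with hk | hk
    · simp [hk]
    · obtain ⟨m, rfl⟩ := Nat.exists_eq_add_of_le hk
      rw [Nat.add_comm 1 m]
      rw [Finset.sum_range_succ' (fun j => (j : ℝ) * z ^ (j - 1) / (Nat.factorial j : ℝ))]
      simp only [Nat.add_sub_cancel]
      simp only [Nat.cast_zero, zero_mul, zero_div, add_zero, Nat.factorial]
      refine Finset.sum_congr rfl (fun j _ => ?_)
      push_cast [Nat.factorial_succ]
      field_simp
  have := (Real.hasDerivAt_exp z).sub hP
  refine HasDerivAt.congr_deriv this ?_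
  rw [truncExpSum_eq]

section moments
variable {z : ℝ}

lemma summable_j_trunc (k : ℕ) (hz : 0 ≤ z) :
    Summable (fun j : ℕ => (j : ℝ) * (if k ≤ j then z ^ j / (Nat.factorial j : ℝ) else 0)) := by
  rw [← summable_nat_add_iff 1]
  have : (fun j : ℕ => ((j + 1 : ℕ) : ℝ) * (if k ≤ j + 1 then z ^ (j+1) / (Nat.factorial (j+1) : ℝ) else 0))
      = fun j : ℕ => z * (if k - 1 ≤ j then z ^ j / (Nat.factorial j : ℝ) else 0) := by
    funext j
    have hiff : k ≤ j + 1 ↔ k - 1 ≤ j := by omega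
    by_cases hj : k - 1 ≤ j
    · rw [if_pos hj, if_pos (hiff.mpr hj)]
      rw [Nat.factorial_succ]
      push_cast
      have : (j:ℝ) + 1 ≠ 0 := by positivity
      field_simp
      ring
    · rw [if_neg hj, if_neg (fun h => hj (hiff.mp h)), mul_zero, mul_zero]
  rw [this]
  exact (summable_trunc (k-1) z hz).mul_left z

lemma tsum_j_trunc (k : ℕ) (hk : 1 ≤ k) (hz : 0 ≤ z) :
    (∑' j : ℕ, (j : ℝ) * (if k ≤ j then z ^ j / (Nat.factorial j : ℝ) else 0))
      = z * truncExpSum (k - 1) z := by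
  rw [Summable.tsum_eq_zero_add (summable_j_trunc k hz)]
  have : (fun j : ℕ => ((j + 1 : ℕ) : ℝ) * (if k ≤ j + 1 then z ^ (j+1) / (Nat.factorial (j+1) : ℝ) else 0))
      = fun j : ℕ => z * (if k - 1 ≤ j then z ^ j / (Nat.factorial j : ℝ) else 0) := by
    funext j
    have hiff : k ≤ j + 1 ↔ k - 1 ≤ j := by omega
    by_cases hj : k - 1 ≤ j
    · rw [if_pos hj, if_pos (hiff.mpr hj)]
      rw [Nat.factorial_succ]
      push_cast
      have : (j:ℝ) + 1 ≠ 0 := by positivity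
      field_simp
      ring
    · rw [if_neg hj, if_neg (fun h => hj (hiff.mp h)), mul_zero, mul_zero]
  rw [this]
  simp only [Nat.cast_zero, zero_mul, zero_add, tsum_mul_left]
  rfl
end moments

section moments2
variable {z : ℝ}

private lemma shift_sq (k : ℕ) (z : ℝ) :
    (fun j : ℕ => ((j + 1 : ℕ) : ℝ)^2 * (if k ≤ j + 1 then z ^ (j+1) / (Nat.factorial (j+1) : ℝ) else 0))
      = fun j : ℕ => z * ((j : ℝ) * (if k - 1 ≤ j then z ^ j / (Nat.factorial j : ℝ) else 0)
          + (if k - 1 ≤ j then z ^ j / (Nat.factorial j : ℝ) else 0)) := by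
  funext j
  have hiff : k ≤ j + 1 ↔ k - 1 ≤ j := by omega
  by_cases hj : k - 1 ≤ j
  · rw [if_pos hj, if_pos (hiff.mpr hj)]
    rw [Nat.factorial_succ]
    push_cast
    have : (j:ℝ) + 1 ≠ 0 := by positivity
    field_simp
    ring
  · rw [if_neg hj, if_neg (fun h => hj (hiff.mp h))]
    simp

lemma summable_j2_trunc (k : ℕ) (hz : 0 ≤ z) :
    Summable (fun j : ℕ => (j : ℝ)^2 * (if k ≤ j then z ^ j / (Nat.factorial j : ℝ) else 0)) := by
  rw [← summable_nat_add_iff 1]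
  rw [shift_sq k z]
  exact ((summable_j_trunc (k-1) hz).add (summable_trunc (k-1) z hz)).mul_left z

lemma tsum_j2_trunc (k : ℕ) (hk : 2 ≤ k) (hz : 0 ≤ z) :
    (∑' j : ℕ, (j : ℝ)^2 * (if k ≤ j then z ^ j / (Nat.factorial j : ℝ) else 0))
      = z * (z * truncExpSum (k - 2) z + truncExpSum (k - 1) z) := by
  rw [Summable.tsum_eq_zero_add (summable_j2_trunc k hz)]
  rw [shift_sq k z]
  rw [tsum_mul_left, Summable.tsum_add (summable_j_trunc (k-1) hz) (summable_trunc (k-1) z hz)]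
  rw [tsum_j_trunc (k-1) (by omega) hz]
  have h2 : k - 1 - 1 = k - 2 := by omega
  rw [h2]
  simp [truncExpSum]
end moments2

set_option maxHeartbeats 1000000 in
lemma variance_pos (k : ℕ) {z : ℝ} (hz : 0 < z) :
    0 < truncExpSum k z * (∑' j : ℕ, (j : ℝ)^2 * (if k ≤ j then z ^ j / (Nat.factorial j : ℝ) else 0))
      - (∑' j : ℕ, (j : ℝ) * (if k ≤ j then z ^ j / (Nat.factorial j : ℝ) else 0))^2 := by
  set A : ℕ → ℝ := fun j => if k ≤ j then z ^ j / (Nat.factorial j : ℝ) else 0 with hAdef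
  have hA : Summable A := summable_trunc k z hz.le
  have h1 : Summable (fun j : ℕ => (j:ℝ) * A j) := summable_j_trunc k hz.le
  have h2 : Summable (fun j : ℕ => (j:ℝ)^2 * A j) := summable_j2_trunc k hz.le
  have hAnn : ∀ j, 0 ≤ A j := by intro j; simp only [hAdef]; split <;> positivity
  have h1nn : ∀ j : ℕ, 0 ≤ (j:ℝ) * A j := fun j => mul_nonneg (by positivity) (hAnn j)
  have h2nn : ∀ j : ℕ, 0 ≤ (j:ℝ)^2 * A j := fun j => mul_nonneg (by positivity) (hAnn j)
  have P1 : Summable (fun p : ℕ × ℕ => A p.1 * ((p.2:ℝ)^2 * A p.2)) :=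
    hA.mul_of_nonneg h2 hAnn h2nn
  have P2 : Summable (fun p : ℕ × ℕ => ((p.1:ℝ)^2 * A p.1) * A p.2) :=
    h2.mul_of_nonneg hA h2nn hAnn
  have P3 : Summable (fun p : ℕ × ℕ => ((p.1:ℝ) * A p.1) * ((p.2:ℝ) * A p.2)) :=
    h1.mul_of_nonneg h1 h1nn h1nn
  have E1 : (∑' j : ℕ, A j) * (∑' j : ℕ, (j:ℝ)^2 * A j) = ∑' p : ℕ × ℕ, A p.1 * ((p.2:ℝ)^2 * A p.2) :=
    Summable.tsum_mul_tsum hA h2 P1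
  have E2 : (∑' j : ℕ, (j:ℝ)^2 * A j) * (∑' j : ℕ, A j) = ∑' p : ℕ × ℕ, ((p.1:ℝ)^2 * A p.1) * A p.2 :=
    Summable.tsum_mul_tsum h2 hA P2
  have E3 : (∑' j : ℕ, (j:ℝ) * A j) * (∑' j : ℕ, (j:ℝ) * A j)
      = ∑' p : ℕ × ℕ, ((p.1:ℝ) * A p.1) * ((p.2:ℝ) * A p.2) :=
    Summable.tsum_mul_tsum h1 h1 P3
  have hfA : truncExpSum k z = ∑' j : ℕ, A j := rfl
  have key : 0 < ∑' p : ℕ × ℕ, A p.1 * A p.2 * ((p.1:ℝ) - (p.2:ℝ))^2 := by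
    have hsum : Summable (fun p : ℕ × ℕ => A p.1 * A p.2 * ((p.1:ℝ) - (p.2:ℝ))^2) := by
      refine ((P1.add P2).sub ((P3.mul_left 2))).congr (fun p => ?_)
      ring
    refine Summable.tsum_pos hsum (fun p => ?_) (k, k + 1) ?_
    · exact mul_nonneg (mul_nonneg (hAnn _) (hAnn _)) (by positivity)
    · have hk1 : A k = z ^ k / (Nat.factorial k : ℝ) := by simp [hAdef]
      have hk2 : A (k+1) = z ^ (k+1) / (Nat.factorial (k+1) : ℝ) := by simp [hAdef]
      rw [hk1, hk2]
      have : ((k:ℝ) - ((k:ℕ) + 1 : ℕ))^2 = 1 := by push_cast; ring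
      push_cast
      have hsq : ((k:ℝ) - ((k:ℝ) + 1)) ^ 2 = 1 := by ring
      rw [hsq, mul_one]
      have c1 : (0:ℝ) < (Nat.factorial k : ℝ) := by positivity
      have c2 : (0:ℝ) < (Nat.factorial (k+1) : ℝ) := by positivity
      positivity
  have expand : (∑' p : ℕ × ℕ, A p.1 * A p.2 * ((p.1:ℝ) - (p.2:ℝ))^2)
      = (∑' p : ℕ × ℕ, A p.1 * ((p.2:ℝ)^2 * A p.2))
        + (∑' p : ℕ × ℕ, ((p.1:ℝ)^2 * A p.1) * A p.2)
        - 2 * (∑' p : ℕ × ℕ, ((p.1:ℝ) * A p.1) * ((p.2:ℝ) * A p.2)) := by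
    rw [← tsum_mul_left (a := (2:ℝ)), ← Summable.tsum_add P1 P2, ← Summable.tsum_sub (P1.add P2) (P3.mul_left 2)]
    refine tsum_congr (fun p => ?_)
    ring
  rw [hfA]
  nlinarith [key, expand, E1, E2, E3]

lemma phiP_eq (r : ℕ) (hr : r ≠ 0) (z : ℝ) :
    phiP r z = z * z ^ (r - 1) / ((Nat.factorial (r - 1) : ℝ) * truncExpSum r z) := by
  rw [phiP, if_neg hr, poisTail]
  have he : Real.exp (-z) ≠ 0 := Real.exp_ne_zero _
  rw [show z * (Real.exp (-z) * z ^ (r - 1) / (Nat.factorial (r - 1) : ℝ))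
      = Real.exp (-z) * (z * z ^ (r-1) / (Nat.factorial (r - 1) : ℝ)) by ring]
  rw [mul_div_mul_left _ _ he, div_div]

lemma num_pos (k : ℕ) (hk : 2 ≤ k) {z : ℝ} (hz : 0 < z) :
    0 < (truncExpSum (k-1) z + z * truncExpSum (k-2) z) * truncExpSum k z
      - z * truncExpSum (k-1) z * truncExpSum (k-1) z := by
  have hv := variance_pos k hz
  rw [tsum_j_trunc k (by omega) hz.le, tsum_j2_trunc k hk hz.le] at hv
  set a := truncExpSum k z
  set b := truncExpSum (k-1) z
  set c := truncExpSum (k-2) z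
  have hzN : 0 < z * ((b + z * c) * a - z * b * b) := by nlinarith [hv]
  nlinarith [hzN, hz, mul_pos hz hz]

lemma truncMean_fun (k : ℕ) :
    truncMean k = fun z => z * truncExpSum (k - 1) z / truncExpSum k z := rfl

lemma hasDerivAt_truncMean_raw (k : ℕ) (hk : 2 ≤ k) {z : ℝ} (hz : 0 < z) :
    HasDerivAt (truncMean k)
      (((truncExpSum (k-1) z + z * truncExpSum (k-2) z) * truncExpSum k z
        - z * truncExpSum (k-1) z * truncExpSum (k-1) z) / (truncExpSum k z)^2) z := by
  have hknz : truncExpSum k z ≠ 0 := (truncExpSum_pos k hz).ne'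
  have hnum : HasDerivAt (fun z => z * truncExpSum (k-1) z)
      (1 * truncExpSum (k-1) z + z * truncExpSum (k-1-1) z) z :=
    (hasDerivAt_id z).mul (hasDerivAt_truncExpSum (k-1) z)
  have := hnum.div (hasDerivAt_truncExpSum k z) hknz
  rw [truncMean_fun]
  refine HasDerivAt.congr_deriv this ?_
  rw [show k - 1 - 1 = k - 2 from by omega]
  ring

lemma one_add_phi_eq (k : ℕ) (hk : 2 ≤ k) {z : ℝ} (hz : 0 < z) :
    truncMean k z * (1 + phiP (k-1) z - phiP k z) / z
      = ((truncExpSum (k-1) z + z * truncExpSum (k-2) z) * truncExpSum k z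
        - z * truncExpSum (k-1) z * truncExpSum (k-1) z) / (truncExpSum k z)^2 := by
  have hb : truncExpSum (k-1) z = truncExpSum k z + z ^ (k-1) / (Nat.factorial (k-1) : ℝ) := by
    have := truncExpSum_succ (k-1) z
    rwa [show k - 1 + 1 = k from by omega] at this
  have hc : truncExpSum (k-2) z = truncExpSum (k-1) z + z ^ (k-2) / (Nat.factorial (k-2) : ℝ) := by
    have := truncExpSum_succ (k-2) z
    rwa [show k - 2 + 1 = k - 1 from by omega] at this
  have hpk : phiP k z = z * z ^ (k - 1) / ((Nat.factorial (k - 1) : ℝ) * truncExpSum k z) :=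
    phiP_eq k (by omega) z
  have hpk1 : phiP (k-1) z = z * z ^ (k - 2) / ((Nat.factorial (k - 2) : ℝ) * truncExpSum (k-1) z) := by
    have := phiP_eq (k-1) (by omega) z
    rwa [show k - 1 - 1 = k - 2 from by omega] at this
  have ha : (0:ℝ) < truncExpSum k z := truncExpSum_pos k hz
  have hb' : (0:ℝ) < truncExpSum (k-1) z := truncExpSum_pos (k-1) hz
  have hf1 : (0:ℝ) < (Nat.factorial (k-1) : ℝ) := by positivity
  have hf2 : (0:ℝ) < (Nat.factorial (k-2) : ℝ) := by positivity
  rw [truncMean, hpk, hpk1, hc, hb]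
  field_simp
  ring

lemma hasDerivAt_truncMean (k : ℕ) (hk : 2 ≤ k) {z : ℝ} (hz : 0 < z) :
    HasDerivAt (truncMean k) (truncMean k z * (1 + phiP (k-1) z - phiP k z) / z) z := by
  rw [one_add_phi_eq k hk hz]
  exact hasDerivAt_truncMean_raw k hk hz

lemma truncMean_deriv_pos (k : ℕ) (hk : 2 ≤ k) {z : ℝ} (hz : 0 < z) :
    0 < truncMean k z * (1 + phiP (k-1) z - phiP k z) / z := by
  rw [one_add_phi_eq k hk hz]
  exact div_pos (num_pos k hk hz) (pow_pos (truncExpSum_pos k hz) 2)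

lemma truncMean_pos (k : ℕ) {z : ℝ} (hz : 0 < z) : 0 < truncMean k z :=
  div_pos (mul_pos hz (truncExpSum_pos (k-1) hz)) (truncExpSum_pos k hz)

lemma contDiffAt_truncMean (k : ℕ) {z : ℝ} (hz : 0 < z) :
    ContDiffAt ℝ ⊤ (truncMean k) z := by
  rw [truncMean_fun]
  exact ((contDiff_id.mul (contDiff_truncExpSum (k-1))).contDiffAt.div
    (contDiff_truncExpSum k).contDiffAt (truncExpSum_pos k hz).ne')

lemma hasStrictDerivAt_truncMean (k : ℕ) (hk : 2 ≤ k) {z : ℝ} (hz : 0 < z) :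
    HasStrictDerivAt (truncMean k) (truncMean k z * (1 + phiP (k-1) z - phiP k z) / z) z := by
  have h := (contDiffAt_truncMean k hz).hasStrictDerivAt (by simp)
  rwa [(hasDerivAt_truncMean k hk hz).deriv] at h

lemma strictMonoOn_truncMean (k : ℕ) (hk : 2 ≤ k) :
    StrictMonoOn (truncMean k) (Set.Ioi 0) := by
  apply strictMonoOn_of_deriv_pos (convex_Ioi 0)
  · intro x hx
    exact ((hasDerivAt_truncMean k hk hx).continuousAt).continuousWithinAt
  · intro x hx
    rw [interior_Ioi] at hx
    rw [(hasDerivAt_truncMean k hk hx).deriv]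
    exact truncMean_deriv_pos k hk hx

lemma one_add_phi_pos (k : ℕ) (hk : 2 ≤ k) {z : ℝ} (hz : 0 < z) :
    0 < 1 + phiP (k-1) z - phiP k z := by
  have hD := truncMean_deriv_pos k hk hz
  have hm := truncMean_pos k hz
  rcases div_pos_iff.1 hD with ⟨h, _⟩ | ⟨_, h2⟩
  · rcases mul_pos_iff.1 h with ⟨_, hA⟩ | ⟨hm', _⟩
    · exact hA
    · linarith
  · linarith

lemma continuousOn_phiP (r : ℕ) (hr : 1 ≤ r) : ContinuousOn (phiP r) (Set.Ioi 0) := by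
  have hfun : ∀ z : ℝ, phiP r z
      = z * (Real.exp (-z) * z ^ (r - 1) / (Nat.factorial (r - 1) : ℝ))
        / (Real.exp (-z) * truncExpSum r z) := by
    intro z; rw [phiP, if_neg (by omega : r ≠ 0)]; rfl
  refine ContinuousOn.congr ?_ (fun z _ => hfun z)
  apply ContinuousOn.div
  · fun_prop
  · exact (Continuous.mul (by fun_prop) (contDiff_truncExpSum r).continuous).continuousOn
  · intro z hz
    have h1 : 0 < truncExpSum r z := truncExpSum_pos r hz
    positivity

lemma continuousAt_F {k1 k2 : ℕ} (h1 : 2 ≤ k1) (h2 : 2 ≤ k2) {F : ℝ → ℝ}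
    (hF : ∀ z : ℝ, 0 < z → 0 < F z ∧ truncMean k2 (F z) = truncMean k1 z)
    {zi : ℝ} (hzi : 0 < zi) : ContinuousAt F zi := by
  have hmono := strictMonoOn_truncMean k2 h2
  have hzo : 0 < F zi := (hF zi hzi).1
  have hψeq : truncMean k2 (F zi) = truncMean k1 zi := (hF zi hzi).2
  have hcont1 : ContinuousAt (truncMean k1) zi := (hasDerivAt_truncMean k1 h1 hzi).continuousAt
  have hpos : ∀ᶠ y in 𝓝 zi, 0 < y := eventually_gt_nhds hzi
  rw [ContinuousAt]
  rw [tendsto_order]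
  constructor
  · intro a ha
    rcases le_or_gt a 0 with ha0 | ha0
    · filter_upwards [hpos] with y hy0
      exact lt_of_le_of_lt ha0 (hF y hy0).1
    · have hlt : truncMean k2 a < truncMean k1 zi := by
        rw [← hψeq]; exact hmono ha0 hzo ha
      have hev : ∀ᶠ y in 𝓝 zi, truncMean k2 a < truncMean k1 y :=
        hcont1.eventually_const_lt hlt
      filter_upwards [hev, hpos] with y hy hy0
      by_contra hc
      push_neg at hc
      have := hmono.monotoneOn (Set.mem_Ioi.2 (hF y hy0).1) (Set.mem_Ioi.2 ha0) hc
      rw [(hF y hy0).2] at this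
      linarith
  · intro b hb
    have hb0 : 0 < b := lt_trans hzo hb
    have hlt : truncMean k1 zi < truncMean k2 b := by
      rw [← hψeq]; exact hmono hzo hb0 hb
    have hev : ∀ᶠ y in 𝓝 zi, truncMean k1 y < truncMean k2 b :=
      hcont1.eventually_lt_const hlt
    filter_upwards [hev, hpos] with y hy hy0
    by_contra hc
    push_neg at hc
    have := hmono.monotoneOn (Set.mem_Ioi.2 hb0) (Set.mem_Ioi.2 (hF y hy0).1) hc
    rw [(hF y hy0).2] at this
    linarith

lemma hasDerivAt_F {k1 k2 : ℕ} (h1 : 2 ≤ k1) (h2 : 2 ≤ k2) {F : ℝ → ℝ}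
    (hF : ∀ z : ℝ, 0 < z → 0 < F z ∧ truncMean k2 (F z) = truncMean k1 z)
    {zi : ℝ} (hzi : 0 < zi) :
    HasDerivAt F
      ((F zi / zi) * (1 + phiP (k1 - 1) zi - phiP k1 zi)
        / (1 + phiP (k2 - 1) (F zi) - phiP k2 (F zi))) zi := by
  have hzo : 0 < F zi := (hF zi hzi).1
  have hψeq : truncMean k2 (F zi) = truncMean k1 zi := (hF zi hzi).2
  set d2 := truncMean k2 (F zi) * (1 + phiP (k2-1) (F zi) - phiP k2 (F zi)) / (F zi) with hd2
  set d1 := truncMean k1 zi * (1 + phiP (k1-1) zi - phiP k1 zi) / zi with hd1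
  have hd2pos : 0 < d2 := truncMean_deriv_pos k2 h2 hzo
  have hd2ne : d2 ≠ 0 := hd2pos.ne'
  have hs2 : HasStrictDerivAt (truncMean k2) d2 (F zi) := hasStrictDerivAt_truncMean k2 h2 hzo
  set g := hs2.localInverse (truncMean k2) d2 (F zi) hd2ne with hgdef
  have hg : HasStrictDerivAt g d2⁻¹ (truncMean k2 (F zi)) := hs2.to_localInverse hd2ne
  have hev : ∀ᶠ x in 𝓝 (F zi), g (truncMean k2 x) = x :=
    (hs2.hasStrictFDerivAt_equiv hd2ne).eventually_left_inverse
  have hFcont : ContinuousAt F zi := continuousAt_F h1 h2 hF hzi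
  have hFev : ∀ᶠ y in 𝓝 zi, g (truncMean k2 (F y)) = F y := hFcont.eventually hev
  have hg' : HasDerivAt g d2⁻¹ (truncMean k1 zi) := by
    rw [← hψeq]; exact hg.hasDerivAt
  have hcomp : HasDerivAt (g ∘ truncMean k1) (d2⁻¹ * d1) zi :=
    hg'.comp zi (hasDerivAt_truncMean k1 h1 hzi)
  have hFg : F =ᶠ[𝓝 zi] g ∘ truncMean k1 := by
    filter_upwards [hFev, eventually_gt_nhds hzi] with y hy hy0
    have := (hF y hy0).2
    simp only [Function.comp_apply, ← this, hy]
  have hder : HasDerivAt F (d2⁻¹ * d1) zi := hcomp.congr_of_eventuallyEq hFg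
  convert hder using 1
  have hm1 : 0 < truncMean k1 zi := truncMean_pos k1 hzi
  have hA2 : 0 < 1 + phiP (k2-1) (F zi) - phiP k2 (F zi) := one_add_phi_pos k2 h2 hzo
  rw [hd2, hd1, hψeq]
  field_simp

lemma deriv_F_pos {k1 k2 : ℕ} (h1 : 2 ≤ k1) (h2 : 2 ≤ k2) {zi zo : ℝ}
    (hzi : 0 < zi) (hzo : 0 < zo) :
    0 < (zo / zi) * (1 + phiP (k1 - 1) zi - phiP k1 zi)
        / (1 + phiP (k2 - 1) zo - phiP k2 zo) := by
  have hA1 : 0 < 1 + phiP (k1-1) zi - phiP k1 zi := one_add_phi_pos k1 h1 hzi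
  have hA2 : 0 < 1 + phiP (k2-1) zo - phiP k2 zo := one_add_phi_pos k2 h2 hzo
  positivity


/-- the implicit function `F` defined by `ψ_{k_1}(z_i) = ψ_{k_2}(F(z_i))`
is continuously differentiable with positive derivative of the stated form. -/
theorem stmt12 (k1 k2 : ℕ) (h1 : 2 ≤ k1) (h2 : 2 ≤ k2) (F : ℝ → ℝ)
    (hF : ∀ z : ℝ, 0 < z → 0 < F z ∧ truncMean k2 (F z) = truncMean k1 z) :
    (∀ zi : ℝ, 0 < zi →
      HasDerivAt F
        ((F zi / zi) * (1 + phiP (k1 - 1) zi - phiP k1 zi)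
          / (1 + phiP (k2 - 1) (F zi) - phiP k2 (F zi))) zi ∧
      0 < (F zi / zi) * (1 + phiP (k1 - 1) zi - phiP k1 zi)
          / (1 + phiP (k2 - 1) (F zi) - phiP k2 (F zi))) ∧
    ContDiffOn ℝ 1 F (Set.Ioi 0) := by
  refine ⟨fun zi hzi => ⟨hasDerivAt_F h1 h2 hF hzi, deriv_F_pos h1 h2 hzi (hF zi hzi).1⟩, ?_⟩
  rw [show (1 : WithTop ℕ∞) = 0 + 1 from rfl]
  rw [contDiffOn_succ_iff_deriv_of_isOpen isOpen_Ioi]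
  have hFcont : ContinuousOn F (Set.Ioi 0) :=
    fun z hz => (continuousAt_F h1 h2 hF hz).continuousWithinAt
  refine ⟨fun z hz => (hasDerivAt_F h1 h2 hF hz).differentiableAt.differentiableWithinAt,
    ?_, ?_⟩
  · intro h; simp at h
  · rw [contDiffOn_zero]
    have hA1 : ContinuousOn (fun z => 1 + phiP (k1-1) z - phiP k1 z) (Set.Ioi 0) :=
      (continuousOn_const.add (continuousOn_phiP (k1-1) (by omega))).sub
        (continuousOn_phiP k1 (by omega))
    have hA2 : ContinuousOn (fun z => 1 + phiP (k2-1) (F z) - phiP k2 (F z)) (Set.Ioi 0) := by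
      have hmap : Set.MapsTo F (Set.Ioi 0) (Set.Ioi 0) := fun z hz => (hF z hz).1
      exact ((continuousOn_const.add (continuousOn_phiP (k2-1) (by omega))).sub
        (continuousOn_phiP k2 (by omega))).comp hFcont hmap
    have htarget : ContinuousOn
        (fun z => (F z / z) * (1 + phiP (k1 - 1) z - phiP k1 z)
          / (1 + phiP (k2 - 1) (F z) - phiP k2 (F z))) (Set.Ioi 0) := by
      apply ContinuousOn.div
      · exact (hFcont.div continuousOn_id (fun z hz => ne_of_gt hz)).mul hA1
      · exact hA2
      · exact fun z hz => (one_add_phi_pos k2 h2 (hF z hz).1).ne'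
    refine ContinuousOn.congr htarget (fun z hz => ?_)
    exact (hasDerivAt_F h1 h2 hF hz).deriv
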